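/- There exists a function D₁ : MorseGauges × ℝ≥1 → ℝ≥1 such that in any geodesic metric space, if γ₁ and γ₂ are M-Morse C-quasi-geodesic rays with γ₁(0) = γ₂(0) and finite Hausdorff distance, then their Hausdorff distance is at most D₁(M, C). -/

import Mathlib

open Set Metric

universe u

/-- `γ` restricted to `I` is a `(lam, eps)`-quasi-geodesic. -/
def IsQuasiGeodesicOn {X : Type*} [MetricSpace X] (γ : ℝ → X) (I : Set ℝ)
    (lam eps : ℝ) : Prop :=
  ∀ s ∈ I, ∀ t ∈ I,
    (1 / lam) * |s - t| - eps ≤ dist (γ s) (γ t) ∧ dist (γ s) (γ t) ≤ lam * |s - t| + eps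

/-- `γ` restricted to `I` is a (unit-speed) geodesic. -/
def IsGeodesicOn {X : Type*} [MetricSpace X] (γ : ℝ → X) (I : Set ℝ) : Prop :=
  ∀ s ∈ I, ∀ t ∈ I, dist (γ s) (γ t) = |s - t|

/-- A metric space is geodesic if any two points are joined by a geodesic. -/
def GeodesicSpace (X : Type*) [MetricSpace X] : Prop :=
  ∀ x y : X, ∃ γ : ℝ → X, γ 0 = x ∧ γ (dist x y) = y ∧ IsGeodesicOn γ (Icc 0 (dist x y))

/-- A Morse gauge: an increasing map `ℝ≥1 × ℝ≥0 → ℝ≥0`, continuous in the second argument. -/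
def IsMorseGauge (M : ℝ → ℝ → ℝ) : Prop :=
  (∀ l e, 1 ≤ l → 0 ≤ e → 0 ≤ M l e) ∧
  (∀ l l' e e', 1 ≤ l → 0 ≤ e → l ≤ l' → e ≤ e' → M l e ≤ M l' e') ∧
  (∀ l, 1 ≤ l → ContinuousOn (fun e => M l e) (Ici 0))

/-- Pointwise partial order on Morse gauges (on the domain `ℝ≥1 × ℝ≥0`). -/
def GaugeLE (M N : ℝ → ℝ → ℝ) : Prop :=
  ∀ l e, 1 ≤ l → 0 ≤ e → M l e ≤ N l e

/-- `γ` restricted to `I` is `M`-Morse: every continuous `(lam, eps)`-quasi-geodesic with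
endpoints on `γ` lies in the closed `M lam eps`-neighbourhood of `γ`. -/
def IsMorseWith {X : Type*} [MetricSpace X] (M : ℝ → ℝ → ℝ) (γ : ℝ → X) (I : Set ℝ) : Prop :=
  ∀ lam eps : ℝ, 1 ≤ lam → 0 ≤ eps →
    ∀ (η : ℝ → X) (a b : ℝ), a ≤ b →
      ContinuousOn η (Icc a b) → IsQuasiGeodesicOn η (Icc a b) lam eps →
      η a ∈ γ '' I → η b ∈ γ '' I →
      ∀ t ∈ Icc a b, ∃ s ∈ I, dist (η t) (γ s) ≤ M lam eps

/-- The constant `δ_M` associated to a Morse gauge `M`. -/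
def morseDelta (M : ℝ → ℝ → ℝ) : ℝ :=
  max (4 * M 1 (2 * M 5 0) + 2 * M 5 0) (8 * M 3 0)

section OneSided

variable {X : Type u} [MetricSpace X]

set_option maxHeartbeats 2000000 in
/-- One-sided bound: every point of `γ₂` is within `M (5C) (9C+1) + 4C` of the image of `γ₁`. -/
private lemma one_sided
    (hX : GeodesicSpace X) (M : ℝ → ℝ → ℝ) (C : ℝ) (γ₁ γ₂ : ℝ → X)
    (hM : IsMorseGauge M) (hC : 1 ≤ C)
    (hq₁ : IsQuasiGeodesicOn γ₁ (Ici 0) C C) (hm₁ : IsMorseWith M γ₁ (Ici 0))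
    (hq₂ : IsQuasiGeodesicOn γ₂ (Ici 0) C C)
    (h0 : γ₁ 0 = γ₂ 0)
    (hfin : EMetric.hausdorffEdist (γ₁ '' Ici 0) (γ₂ '' Ici 0) ≠ ⊤) :
    ∀ v : ℝ, 0 ≤ v → Metric.infDist (γ₂ v) (γ₁ '' Ici 0) ≤ M (5*C) (9*C+1) + 4*C := by
  classical
  intro v hv
  have hC0 : (0:ℝ) < C := lt_of_lt_of_le one_pos hC
  set S : Set X := γ₂ '' Ici 0 with hSdef
  have hSne : S.Nonempty := ⟨γ₂ 0, 0, self_mem_Ici, rfl⟩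
  set K : ℝ := hausdorffDist (γ₁ '' Ici 0) S with hKdef
  have hK0 : 0 ≤ K := hausdorffDist_nonneg
  set t : ℝ := C*(C*(v+2) + 2*C + K + 1) with htdef
  have ht0 : 0 ≤ t := by
    have h : 0 ≤ C*(v+2) + 2*C + K + 1 := by nlinarith
    rw [htdef]; exact mul_nonneg (le_of_lt hC0) h
  set x : X := γ₁ t with hxdef
  have hxmem : x ∈ γ₁ '' Ici 0 := ⟨t, mem_Ici.mpr ht0, rfl⟩
  set IP : ℝ := infDist x S with hIPdef
  have hIP0 : 0 ≤ IP := Metric.infDist_nonneg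
  have hIPK : IP ≤ K := Metric.infDist_le_hausdorffDist_of_mem hxmem hfin
  obtain ⟨y, hyS, hy⟩ := (Metric.infDist_lt_iff hSne).mp (lt_add_one IP)
  obtain ⟨vs, hvs0, rfl⟩ := hyS
  -- hy : dist x (γ₂ vs) < IP + 1
  -- vs is large
  have hd0x : (1/C)*t - C ≤ dist (γ₂ 0) x := by
    have h := (hq₁ 0 self_mem_Ici t (mem_Ici.mpr ht0)).1
    rw [hxdef, ← h0]
    calc (1/C)*t - C = (1/C)*|0 - t| - C := by rw [abs_sub_comm, sub_zero, abs_of_nonneg ht0]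
    _ ≤ dist (γ₁ 0) (γ₁ t) := h
  have hd0vs : dist (γ₂ 0) (γ₂ vs) ≤ C*vs + C := by
    have h := (hq₂ 0 self_mem_Ici vs (mem_Ici.mpr hvs0)).2
    calc dist (γ₂ 0) (γ₂ vs) ≤ C*|0 - vs| + C := h
    _ = C*vs + C := by rw [abs_sub_comm, sub_zero, abs_of_nonneg hvs0]
  have hvsbig : v + 2 ≤ vs := by
    have htri : dist (γ₂ 0) x ≤ dist (γ₂ 0) (γ₂ vs) + dist x (γ₂ vs) := by
      rw [dist_comm x (γ₂ vs)]; exact dist_triangle _ _ _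
    have hct : (1/C)*t = C*(v+2) + 2*C + K + 1 := by
      rw [htdef]; field_simp
    have : C*(v+2) ≤ C*vs := by nlinarith
    exact le_of_mul_le_mul_left (by linarith) hC0
  set n₀ : ℕ := ⌊vs⌋₊ with hn₀def
  have hn₀vs : (n₀:ℝ) ≤ vs := Nat.floor_le hvs0
  have hvsn₀ : vs < (n₀:ℝ) + 1 := Nat.lt_floor_add_one vs
  have hn₀v : v + 1 < (n₀:ℝ) := by linarith
  have hn₀pos : (0:ℝ) < (n₀:ℝ) := by linarith
  set p : X := γ₂ (n₀:ℝ) with hpdef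
  set P : ℝ := dist p x with hPdef
  have hP0 : 0 ≤ P := dist_nonneg
  have hPle : P ≤ IP + 1 + 2*C := by
    have h1 : dist p (γ₂ vs) ≤ C*|(n₀:ℝ) - vs| + C :=
      (hq₂ (n₀:ℝ) (mem_Ici.mpr (le_of_lt hn₀pos)) vs (mem_Ici.mpr hvs0)).2
    have h2 : |(n₀:ℝ) - vs| ≤ 1 := by
      rw [abs_sub_comm, abs_of_nonneg (by linarith)]; linarith
    have htri : P ≤ dist p (γ₂ vs) + dist (γ₂ vs) x := dist_triangle _ _ _
    have : dist (γ₂ vs) x = dist x (γ₂ vs) := dist_comm _ _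
    nlinarith
  have hIPd : ∀ w : ℝ, 0 ≤ w → IP ≤ dist x (γ₂ w) := fun w hw =>
    Metric.infDist_le_dist_of_mem ⟨w, mem_Ici.mpr hw, rfl⟩
  -- geodesic pieces
  have hpieces : ∀ k : ℕ, ∃ g : ℝ → X, g 0 = γ₂ (k:ℝ) ∧
      g (dist (γ₂ (k:ℝ)) (γ₂ ((k:ℝ)+1))) = γ₂ ((k:ℝ)+1) ∧
      IsGeodesicOn g (Icc 0 (dist (γ₂ (k:ℝ)) (γ₂ ((k:ℝ)+1)))) :=
    fun k => hX (γ₂ (k:ℝ)) (γ₂ ((k:ℝ)+1))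
  choose g hg0 hg1 hgeo using hpieces
  set d : ℕ → ℝ := fun k => dist (γ₂ (k:ℝ)) (γ₂ ((k:ℝ)+1)) with hddef
  have hd0 : ∀ k, 0 ≤ d k := fun k => dist_nonneg
  have hdle : ∀ k : ℕ, d k ≤ 2*C := by
    intro k
    have h := (hq₂ (k:ℝ) (mem_Ici.mpr (Nat.cast_nonneg k)) ((k:ℝ)+1) (mem_Ici.mpr (by positivity))).2
    have h1 : |(k:ℝ) - ((k:ℝ)+1)| = 1 := by
      rw [show (k:ℝ) - ((k:ℝ)+1) = -1 by ring, abs_neg, abs_one]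
    rw [h1] at h; linarith
  obtain ⟨gs, hgs0, hgs1, hgsgeo⟩ := hX p x
  -- the path
  set Ω : ℝ → X := fun w =>
    if w < (n₀:ℝ) then g ⌊w⌋₊ ((w - (⌊w⌋₊:ℝ)) * d ⌊w⌋₊) else gs (w - (n₀:ℝ)) with hΩdef
  have htame_eval : ∀ w : ℝ, w < (n₀:ℝ) → Ω w = g ⌊w⌋₊ ((w - (⌊w⌋₊:ℝ)) * d ⌊w⌋₊) := by
    intro w hw; simp only [hΩdef, if_pos hw]
  have hspike_eval : ∀ w : ℝ, (n₀:ℝ) ≤ w → Ω w = gs (w - (n₀:ℝ)) := by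
    intro w hw; simp only [hΩdef, if_neg (not_lt.mpr hw)]
  -- distance from Ω to γ₂ on the tame part
  have hΩclose : ∀ w : ℝ, 0 ≤ w → w ≤ (n₀:ℝ) → dist (Ω w) (γ₂ w) ≤ 4*C := by
    intro w hw0 hwn
    rcases eq_or_lt_of_le hwn with heq | hlt
    · have h1 : Ω w = p := by rw [hspike_eval w (le_of_eq heq.symm), heq, sub_self, hgs0]
      rw [h1, heq, hpdef, dist_self]
      linarith
    · rw [htame_eval w hlt]
      set k : ℕ := ⌊w⌋₊ with hk
      have hk_le : (k:ℝ) ≤ w := Nat.floor_le hw0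
      have hk_lt : w < (k:ℝ) + 1 := Nat.lt_floor_add_one w
      set u : ℝ := (w - (k:ℝ)) * d k with hu
      have hu0 : 0 ≤ u := mul_nonneg (by linarith) (hd0 k)
      have hud : u ≤ d k := mul_le_of_le_one_left (hd0 k) (by linarith)
      have hdist1 : dist (g k u) (g k 0) = u := by
        rw [hgeo k u ⟨hu0, hud⟩ 0 ⟨le_refl 0, hd0 k⟩, sub_zero, abs_of_nonneg hu0]
      have hdist2 : dist (γ₂ (k:ℝ)) (γ₂ w) ≤ C*|(k:ℝ) - w| + C :=
        (hq₂ (k:ℝ) (mem_Ici.mpr (Nat.cast_nonneg k)) w (mem_Ici.mpr hw0)).2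
      have habs : |(k:ℝ) - w| ≤ 1 := by
        rw [abs_sub_comm, abs_of_nonneg (by linarith)]; linarith
      calc dist (g k u) (γ₂ w) ≤ dist (g k u) (g k 0) + dist (g k 0) (γ₂ w) :=
            dist_triangle _ _ _
      _ = u + dist (γ₂ (k:ℝ)) (γ₂ w) := by rw [hdist1, hg0]
      _ ≤ d k + (C*|(k:ℝ) - w| + C) := by
          have := hud; have := hdist2; linarith
      _ ≤ 2*C + (C*1 + C) := by
          have h2 := hdle k
          have h3 : C*|(k:ℝ) - w| ≤ C*1 := mul_le_mul_of_nonneg_left habs (le_of_lt hC0)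
          linarith
      _ = 4*C := by ring

  have hCne : C ≠ 0 := ne_of_gt hC0
  have h5Cpos : (0:ℝ) < 5*C := by linarith
  -- one-step Lipschitz bound
  have hSL : ∀ s u : ℝ, 0 ≤ s → s ≤ u → u ≤ (n₀:ℝ) + P →
      (u ≤ (⌊s⌋₊:ℝ) + 1 ∨ (n₀:ℝ) ≤ s) → dist (Ω s) (Ω u) ≤ 2*C*(u - s) := by
    intro s u hs0 hsu huP hcase
    rcases le_or_gt (n₀:ℝ) s with hns | hns
    · rw [hspike_eval s hns, hspike_eval u (le_trans hns hsu)]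
      have h1 : s - (n₀:ℝ) ∈ Icc 0 P := ⟨by linarith, by linarith⟩
      have h2 : u - (n₀:ℝ) ∈ Icc 0 P := ⟨by linarith, by linarith⟩
      rw [hgsgeo _ h1 _ h2, abs_of_nonpos (by linarith)]
      nlinarith [mul_nonneg (by linarith : (0:ℝ) ≤ 2*C - 1) (by linarith : (0:ℝ) ≤ u - s)]
    · have hu1 : u ≤ (⌊s⌋₊:ℝ) + 1 := by
        rcases hcase with h | h
        · exact h
        · linarith
      set k : ℕ := ⌊s⌋₊ with hk
      have hk_le : (k:ℝ) ≤ s := Nat.floor_le hs0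
      have hk_lt : s < (k:ℝ) + 1 := Nat.lt_floor_add_one s
      have hkn : k < n₀ := (Nat.floor_lt hs0).mpr hns
      have hkn' : (k:ℝ) + 1 ≤ (n₀:ℝ) := by exact_mod_cast Nat.succ_le_of_lt hkn
      have hΩs : Ω s = g k ((s - (k:ℝ)) * d k) := htame_eval s (by linarith)
      have hsmem : (s - (k:ℝ)) * d k ∈ Icc 0 (d k) :=
        ⟨mul_nonneg (by linarith) (hd0 k), mul_le_of_le_one_left (hd0 k) (by linarith)⟩
      have hcast : ((k+1:ℕ):ℝ) = (k:ℝ)+1 := by push_cast; ring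
      have hjun : Ω ((k:ℝ)+1) = g k (d k) := by
        rcases lt_or_eq_of_le hkn' with h3 | h3
        · rw [htame_eval _ h3]
          have hfl : ⌊(k:ℝ)+1⌋₊ = k + 1 := by rw [← hcast, Nat.floor_natCast]
          rw [hfl, hcast, show ((k:ℝ)+1 - ((k:ℝ)+1)) * d (k+1) = 0 by ring,
            hg0 (k+1), hcast, hg1 k]
        · rw [hspike_eval _ (le_of_eq h3.symm), h3, sub_self, hgs0, hpdef, ← h3, hg1 k]
      rcases lt_or_eq_of_le hu1 with hu2 | hu2
      · have hfl : ⌊u⌋₊ = k := by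
          rw [Nat.floor_eq_iff (le_trans hs0 hsu)]
          exact ⟨le_trans hk_le hsu, hu2⟩
        have humem : (u - (k:ℝ)) * d k ∈ Icc 0 (d k) :=
          ⟨mul_nonneg (by linarith) (hd0 k), mul_le_of_le_one_left (hd0 k) (by linarith)⟩
        rw [hΩs, htame_eval u (by linarith), hfl, hgeo k _ hsmem _ humem,
          show (s - (k:ℝ)) * d k - (u - (k:ℝ)) * d k = -((u - s) * d k) by ring, abs_neg,
          abs_of_nonneg (mul_nonneg (by linarith) (hd0 k))]
        nlinarith [mul_nonneg (by linarith : (0:ℝ) ≤ u - s)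
          (sub_nonneg.mpr (hdle k))]
      · rw [hΩs, hu2, hjun, hgeo k _ hsmem _ ⟨hd0 k, le_refl (d k)⟩,
          show (s - (k:ℝ)) * d k - d k = -((((k:ℝ)+1) - s) * d k) by ring, abs_neg,
          abs_of_nonneg (mul_nonneg (by linarith) (hd0 k))]
        nlinarith [mul_nonneg (by linarith : (0:ℝ) ≤ (k:ℝ)+1 - s)
          (sub_nonneg.mpr (hdle k))]
  -- chaining to global Lipschitz bound
  have hchain : ∀ j : ℕ, ∀ s u : ℝ, 0 ≤ s → s ≤ u → u ≤ (n₀:ℝ) + P →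
      n₀ ≤ ⌊s⌋₊ + j → dist (Ω s) (Ω u) ≤ 2*C*(u - s) := by
    intro j
    induction j with
    | zero =>
      intro s u hs0 hsu huP hj
      refine hSL s u hs0 hsu huP (Or.inr ?_)
      have h1 : n₀ ≤ ⌊s⌋₊ := by omega
      have h2 : (n₀:ℝ) ≤ (⌊s⌋₊:ℝ) := Nat.cast_le.mpr h1
      linarith [Nat.floor_le hs0]
    | succ j ih =>
      intro s u hs0 hsu huP hj
      by_cases hc : u ≤ (⌊s⌋₊:ℝ) + 1 ∨ (n₀:ℝ) ≤ s
      · exact hSL s u hs0 hsu huP hc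
      · push_neg at hc
        obtain ⟨hc1, hc2⟩ := hc
        set w : ℝ := (⌊s⌋₊:ℝ) + 1 with hwdef
        have hw0 : 0 ≤ w := by positivity
        have hsw : s ≤ w := le_of_lt (Nat.lt_floor_add_one s)
        have hwu : w ≤ u := le_of_lt hc1
        have hflw : ⌊w⌋₊ = ⌊s⌋₊ + 1 := by
          rw [hwdef, show ((⌊s⌋₊:ℝ)+1) = ((⌊s⌋₊+1:ℕ):ℝ) by push_cast; ring, Nat.floor_natCast]
        have hjw : n₀ ≤ ⌊w⌋₊ + j := by rw [hflw]; omega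
        calc dist (Ω s) (Ω u) ≤ dist (Ω s) (Ω w) + dist (Ω w) (Ω u) := dist_triangle _ _ _
        _ ≤ 2*C*(w - s) + 2*C*(u - w) :=
            add_le_add (hSL s w hs0 hsw (le_trans hwu huP) (Or.inl (le_refl _)))
              (ih w u hw0 hwu huP hjw)
        _ = 2*C*(u - s) := by ring
  have hlip : ∀ a ∈ Icc (0:ℝ) ((n₀:ℝ)+P), ∀ b ∈ Icc (0:ℝ) ((n₀:ℝ)+P),
      dist (Ω a) (Ω b) ≤ (2*C) * dist a b := by
    intro a ha b hb
    rcases le_total a b with h | h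
    · have h1 := hchain n₀ a b ha.1 h hb.2 (by omega)
      rw [Real.dist_eq, abs_of_nonpos (by linarith)]
      nlinarith
    · have h1 := hchain n₀ b a hb.1 h ha.2 (by omega)
      rw [dist_comm (Ω a), Real.dist_eq, abs_of_nonneg (by linarith)]
      nlinarith
  have hcont : ContinuousOn Ω (Icc 0 ((n₀:ℝ)+P)) := by
    have hl : LipschitzOnWith (Real.toNNReal (2*C)) Ω (Icc 0 ((n₀:ℝ)+P)) := by
      rw [lipschitzOnWith_iff_dist_le_mul]
      intro y hy z hz
      simpa [Real.coe_toNNReal (2*C) (by linarith : (0:ℝ) ≤ 2*C)] using hlip y hy z hz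
    exact hl.continuousOn
  -- the quasi-geodesic property
  have hmain : ∀ s u : ℝ, s ∈ Icc (0:ℝ) ((n₀:ℝ)+P) → u ∈ Icc (0:ℝ) ((n₀:ℝ)+P) → s ≤ u →
      (1/(5*C))*(u - s) - (9*C+1) ≤ dist (Ω s) (Ω u) ∧
        dist (Ω s) (Ω u) ≤ 5*C*(u - s) + (9*C+1) := by
    intro s u hsI huI hsu
    obtain ⟨hs0, hsP⟩ := hsI
    obtain ⟨hu0, huP⟩ := huI
    rcases le_or_gt u (n₀:ℝ) with hA | hA
    · -- both in the tame part
      have e1 : dist (Ω s) (γ₂ s) ≤ 4*C := hΩclose s hs0 (le_trans hsu hA)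
      have e2 : dist (Ω u) (γ₂ u) ≤ 4*C := hΩclose u hu0 hA
      have hq := hq₂ s (mem_Ici.mpr hs0) u (mem_Ici.mpr hu0)
      rw [show |s - u| = u - s by rw [abs_sub_comm, abs_of_nonneg (by linarith)]] at hq
      have htri1 : dist (γ₂ s) (γ₂ u) ≤ dist (Ω s) (Ω u) + 8*C := by
        have h1 : dist (γ₂ s) (γ₂ u) ≤ dist (γ₂ s) (Ω s) + dist (Ω s) (Ω u) + dist (Ω u) (γ₂ u) :=
          dist_triangle4 _ _ _ _
        rw [dist_comm (γ₂ s) (Ω s)] at h1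
        linarith
      have htri2 : dist (Ω s) (Ω u) ≤ dist (γ₂ s) (γ₂ u) + 8*C := by
        have h1 : dist (Ω s) (Ω u) ≤ dist (Ω s) (γ₂ s) + dist (γ₂ s) (γ₂ u) + dist (γ₂ u) (Ω u) :=
          dist_triangle4 _ _ _ _
        rw [dist_comm (γ₂ u) (Ω u)] at h1
        linarith
      constructor
      · have h2 : (1/(5*C))*(u-s) ≤ (1/C)*(u-s) :=
          mul_le_mul_of_nonneg_right (one_div_le_one_div_of_le hC0 (by linarith)) (by linarith)
        linarith [hq.1]
      · have h3 : C*(u-s) ≤ 5*C*(u-s) := by nlinarith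
        linarith [hq.2]
    · rcases le_or_gt (n₀:ℝ) s with hB | hB
      · -- both in the spike
        have h1 : s - (n₀:ℝ) ∈ Icc 0 P := ⟨by linarith, by linarith⟩
        have h2 : u - (n₀:ℝ) ∈ Icc 0 P := ⟨by linarith, by linarith⟩
        rw [hspike_eval s hB, hspike_eval u (by linarith), hgsgeo _ h1 _ h2,
          abs_of_nonpos (by linarith)]
        have h5 : 1/(5*C) ≤ 1 := by rw [div_le_one h5Cpos]; linarith
        constructor
        · nlinarith [mul_le_mul_of_nonneg_right h5 (by linarith : (0:ℝ) ≤ u - s)]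
        · nlinarith [mul_nonneg (by linarith : (0:ℝ) ≤ 5*C - 1) (by linarith : (0:ℝ) ≤ u - s)]
      · -- mixed case
        have hsn : s ≤ (n₀:ℝ) := le_of_lt hB
        have hnu : (n₀:ℝ) ≤ u := le_of_lt hA
        set a : ℝ := (n₀:ℝ) - s with hadef
        set b : ℝ := u - (n₀:ℝ) with hbdef
        have ha0 : 0 ≤ a := by rw [hadef]; linarith
        have hb0 : 0 ≤ b := by rw [hbdef]; linarith
        have hbP : b ≤ P := by rw [hbdef]; linarith
        have huv : u - s = a + b := by rw [hadef, hbdef]; ring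
        have hΩu : Ω u = gs (u - (n₀:ℝ)) := hspike_eval u hnu
        have hdux : dist (Ω u) x = P - b := by
          rw [hΩu, ← hgs1, hgsgeo _ ⟨by linarith, by linarith⟩ _ ⟨hP0, le_refl P⟩,
            abs_of_nonpos (by linarith)]
          rw [hbdef]; ring
        have hdup : dist (Ω u) p = b := by
          rw [hΩu, ← hgs0, hgsgeo _ ⟨by linarith, by linarith⟩ _ ⟨le_refl (0:ℝ), hP0⟩,
            sub_zero, abs_of_nonneg (by linarith)]
        have hs4 : dist (Ω s) (γ₂ s) ≤ 4*C := hΩclose s hs0 hsn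
        have hqsp := hq₂ s (mem_Ici.mpr hs0) (n₀:ℝ) (mem_Ici.mpr (le_of_lt hn₀pos))
        rw [show |s - (n₀:ℝ)| = a by rw [hadef, abs_sub_comm, abs_of_nonneg (by linarith)]] at hqsp
        constructor
        · -- lower bound
          have hxs : IP - 4*C ≤ dist (Ω s) x := by
            have h1 : dist x (γ₂ s) ≤ dist x (Ω s) + dist (Ω s) (γ₂ s) := dist_triangle _ _ _
            have h2 := hIPd s hs0
            rw [dist_comm x (Ω s)] at h1
            linarith
          have hlow1 : b - (6*C + 1) ≤ dist (Ω s) (Ω u) := by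
            have h1 : dist (Ω s) x ≤ dist (Ω s) (Ω u) + dist (Ω u) x := dist_triangle _ _ _
            rw [hdux] at h1
            linarith [hPle]
          have hlow2 : (1/C)*a - 5*C - b ≤ dist (Ω s) (Ω u) := by
            have h1 : dist (γ₂ s) p ≤ dist (γ₂ s) (Ω s) + dist (Ω s) (Ω u) + dist (Ω u) p :=
              dist_triangle4 _ _ _ _
            rw [hdup, dist_comm (γ₂ s) (Ω s)] at h1
            linarith [hqsp.1]
          rw [huv]
          rcases le_or_gt a (4*C*b) with hcase | hcase
          · have hab : a + b ≤ 5*C*b := by nlinarith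
            have h1 : (1/(5*C))*(a+b) ≤ (1/(5*C))*(5*C*b) :=
              mul_le_mul_of_nonneg_left hab (le_of_lt (one_div_pos.mpr h5Cpos))
            have h2 : (1/(5*C))*(5*C*b) = b := by field_simp
            linarith
          · have hab : a + b + 5*C*b ≤ 5*a := by nlinarith
            have heq5 : 5*C*((1/C)*a - b) = 5*a - 5*C*b := by field_simp
            have h1 : a + b ≤ 5*C*((1/C)*a - b) := by rw [heq5]; linarith
            have h2 : (1/(5*C))*(a+b) ≤ (1/(5*C))*(5*C*((1/C)*a - b)) :=
              mul_le_mul_of_nonneg_left h1 (le_of_lt (one_div_pos.mpr h5Cpos))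
            have h3 : (1/(5*C))*(5*C*((1/C)*a - b)) = (1/C)*a - b := by field_simp
            linarith
        · -- upper bound
          have h1 : dist (Ω s) (Ω u) ≤ dist (Ω s) (γ₂ s) + dist (γ₂ s) p + dist p (Ω u) :=
            dist_triangle4 _ _ _ _
          rw [dist_comm p (Ω u), hdup] at h1
          rw [huv]
          nlinarith [hqsp.2, mul_nonneg (le_of_lt hC0) ha0,
            mul_nonneg (by linarith : (0:ℝ) ≤ 5*C - 1) hb0]
  have hQG : IsQuasiGeodesicOn Ω (Icc 0 ((n₀:ℝ)+P)) (5*C) (9*C+1) := by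
    intro s hs u hu
    rcases le_total s u with h | h
    · have hm2 := hmain s u hs hu h
      rw [show |s - u| = u - s by rw [abs_sub_comm, abs_of_nonneg (by linarith)]]
      exact hm2
    · have hm2 := hmain u s hu hs h
      rw [show |s - u| = s - u from abs_of_nonneg (by linarith), dist_comm (Ω s) (Ω u)]
      exact hm2
  -- endpoints
  have hΩ0 : Ω 0 = γ₁ 0 := by
    rw [htame_eval 0 hn₀pos]
    have hg00 : g 0 0 = γ₂ 0 := by simpa using hg0 0
    have : ((0:ℝ) - (⌊(0:ℝ)⌋₊:ℝ)) * d ⌊(0:ℝ)⌋₊ = 0 := by simp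
    rw [this]
    simp only [Nat.floor_zero]
    rw [hg00, h0]
  have hΩend : Ω ((n₀:ℝ)+P) = x := by
    rw [hspike_eval _ (by linarith), add_sub_cancel_left, hgs1]
  have happ := hm₁ (5*C) (9*C+1) (by linarith) (by linarith) Ω 0 ((n₀:ℝ)+P)
    (by linarith) hcont hQG
    (by rw [hΩ0]; exact ⟨0, self_mem_Ici, rfl⟩)
    (by rw [hΩend]; exact hxmem)
  obtain ⟨s', hs', hds'⟩ := happ v ⟨hv, by linarith⟩
  have hclose := hΩclose v hv (by linarith)
  have hfinal : dist (γ₂ v) (γ₁ s') ≤ M (5*C) (9*C+1) + 4*C := by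
    have h1 : dist (γ₂ v) (γ₁ s') ≤ dist (γ₂ v) (Ω v) + dist (Ω v) (γ₁ s') := dist_triangle _ _ _
    rw [dist_comm (γ₂ v) (Ω v)] at h1
    linarith
  exact le_trans (Metric.infDist_le_dist_of_mem ⟨s', hs', rfl⟩) hfinal

end OneSided

/-- There is `D₁ : 𝓜 × ℝ≥1 → ℝ≥1` such that any two `M`-Morse
`C`-quasi-geodesic rays with the same starting point and finite Hausdorff distance have
Hausdorff distance at most `D₁ M C`. -/
theorem statement6 : ∃ D₁ : (ℝ → ℝ → ℝ) → ℝ → ℝ,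
    (∀ M C, IsMorseGauge M → 1 ≤ C → 1 ≤ D₁ M C) ∧
    ∀ (X : Type u) [inst : MetricSpace X], GeodesicSpace X →
      ∀ (M : ℝ → ℝ → ℝ) (C : ℝ) (γ₁ γ₂ : ℝ → X),
        IsMorseGauge M → 1 ≤ C →
        IsQuasiGeodesicOn γ₁ (Ici 0) C C → IsMorseWith M γ₁ (Ici 0) →
        IsQuasiGeodesicOn γ₂ (Ici 0) C C → IsMorseWith M γ₂ (Ici 0) →
        γ₁ 0 = γ₂ 0 →
        EMetric.hausdorffEdist (γ₁ '' Ici 0) (γ₂ '' Ici 0) ≠ ⊤ →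
        Metric.hausdorffDist (γ₁ '' Ici 0) (γ₂ '' Ici 0) ≤ D₁ M C := by
  refine ⟨fun M C => max 1 (M (5*C) (9*C+1) + 4*C), fun M C _ _ => le_max_left _ _, ?_⟩
  intro X inst hX M C γ₁ γ₂ hM hC hq₁ hm₁ hq₂ hm₂ h0 hfin
  have hC0 : (0:ℝ) < C := lt_of_lt_of_le one_pos hC
  have hD₀ : 0 ≤ M (5*C) (9*C+1) + 4*C :=
    add_nonneg (hM.1 _ _ (by linarith) (by linarith)) (by linarith)
  have side2 : ∀ z ∈ γ₂ '' Ici 0, infDist z (γ₁ '' Ici 0) ≤ M (5*C) (9*C+1) + 4*C := by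
    rintro z ⟨v, hv, rfl⟩
    exact one_sided hX M C γ₁ γ₂ hM hC hq₁ hm₁ hq₂ h0 hfin v hv
  have hfin' : EMetric.hausdorffEdist (γ₂ '' Ici 0) (γ₁ '' Ici 0) ≠ ⊤ := by
    show Metric.hausdorffEDist _ _ ≠ ⊤
    rw [Metric.hausdorffEDist_comm]; exact hfin
  have side1 : ∀ z ∈ γ₁ '' Ici 0, infDist z (γ₂ '' Ici 0) ≤ M (5*C) (9*C+1) + 4*C := by
    rintro z ⟨v, hv, rfl⟩
    exact one_sided hX M C γ₂ γ₁ hM hC hq₂ hm₂ hq₁ h0.symm hfin' v hv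
  exact le_trans (Metric.hausdorffDist_le_of_infDist hD₀ side1 side2) (le_max_right _ _)
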